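/- Let X̃ be a complete non-compact Riemannian manifold (or proper geodesic metric space) with a point p̃, and G a discrete group of isometries acting freely on X̃. If X̃ has small diameter growth at p̃, i.e. limsup_{r→∞} diam(∂B(p̃,r))/r < 1, then either the quotient X̃/G is compact or G is finite. -/

import Mathlib

open Metric Filter MeasureTheory

attribute [local instance] Path.Homotopic.setoid

/-- Length of a path in a metric space (total variation). -/
noncomputable def pathLength {X : Type*} [MetricSpace X] {a b : X} (γ : Path a b) : ENNReal :=
  eVariationOn γ Set.univ

/-- `L(C)`: the infimum of lengths of loops based at `p` in the homotopy class `C`. -/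
noncomputable def classLength {X : Type*} [MetricSpace X] (p : X)
    (C : FundamentalGroup X p) : ENNReal :=
  ⨅ γ : {γ : Path p p // (⟦γ⟧ : Path.Homotopic.Quotient p p) = FundamentalGroup.toPath C}, pathLength γ.1

/-- A unit-speed minimizing geodesic on the interval `[s, t]`. -/
def IsMinGeodesicOn {X : Type*} [MetricSpace X] (γ : ℝ → X) (s t : ℝ) : Prop :=
  ∀ u ∈ Set.Icc s t, ∀ v ∈ Set.Icc s t, dist (γ u) (γ v) = |u - v|

/-- A geodesic ray: unit-speed and globally minimizing on `[0, ∞)`. -/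
def IsRay {X : Type*} [MetricSpace X] (γ : ℝ → X) : Prop :=
  ∀ u ∈ Set.Ici (0 : ℝ), ∀ v ∈ Set.Ici (0 : ℝ), dist (γ u) (γ v) = |u - v|

/-- Euclidean comparison angle from the three side lengths. -/
noncomputable def compAngle (a b c : ℝ) : ℝ :=
  Real.arccos ((a ^ 2 + b ^ 2 - c ^ 2) / (2 * a * b))

/-- The (upper) angle at the common origin between two geodesics, defined via
Euclidean comparison angles. -/
noncomputable def upperAngle {X : Type*} [MetricSpace X] (γ₁ γ₂ : ℝ → X) : ℝ :=
  limsup (fun st : ℝ × ℝ => compAngle st.1 st.2 (dist (γ₁ st.1) (γ₂ st.2)))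
    (nhdsWithin 0 (Set.Ioi (0 : ℝ) ×ˢ Set.Ioi (0 : ℝ)))

/-- Grove–Shiohama criticality of `m` for the distance function `d(p, ·)`:
every geodesic direction at `m` makes an angle `≤ π/2` with some minimizing
geodesic from `m` to `p`. -/
def IsCriticalPoint {X : Type*} [MetricSpace X] (p m : X) : Prop :=
  ∀ σ : ℝ → X, σ 0 = m → (∃ ε > 0, IsMinGeodesicOn σ 0 ε) →
    ∃ τ : ℝ → X, τ 0 = m ∧ τ (dist m p) = p ∧ IsMinGeodesicOn τ 0 (dist m p) ∧
      upperAngle σ τ ≤ Real.pi / 2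

/-- A nontrivial class is irreducible if in every decomposition `C = C₁C₂`, one of the
factors is at least as long as `C`. -/
def IrreducibleClass {X : Type*} [MetricSpace X] (p : X) (C : FundamentalGroup X p) : Prop :=
  C ≠ 1 ∧ ∀ C₁ C₂ : FundamentalGroup X p, C = C₁ * C₂ →
    classLength p C ≤ classLength p C₁ ∨ classLength p C ≤ classLength p C₂

/-- if a complete non-compact proper geodesic space has small diameter
growth at a point, then for any discrete free isometric action the quotient is compact
or the group is finite. -/
theorem small_diameter_growth_compact_or_finite {X : Type*} [MetricSpace X]
    [ProperSpace X] [NoncompactSpace X] (p : X)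
    (hgeo : ∀ x y : X, ∃ γ : ℝ → X, γ 0 = x ∧ γ (dist x y) = y ∧
      IsMinGeodesicOn γ 0 (dist x y))
    (G : Type*) [Group G] [MulAction G X]
    (hiso : ∀ g : G, Isometry (fun x : X => g • x))
    [ProperlyDiscontinuousSMul G X]
    (hfree : ∀ (g : G) (x : X), g • x = x → g = 1)
    (hgrowth : limsup (fun r : ℝ => diam (sphere p r) / r) atTop < 1) :
    CompactSpace (Quotient (MulAction.orbitRel G X)) ∨ Finite G := by
  by_cases hball : ∃ R : ℝ, ∀ x : X, ∃ g : G, dist p (g • x) < R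
  · -- every orbit meets a fixed closed ball: the quotient is compact
    left
    obtain ⟨R, hR⟩ := hball
    have himg : (Set.univ : Set (Quotient (MulAction.orbitRel G X))) =
        (Quotient.mk (MulAction.orbitRel G X)) '' Metric.closedBall p R := by
      ext q
      simp only [Set.mem_univ, true_iff]
      obtain ⟨x, rfl⟩ := Quotient.exists_rep q
      obtain ⟨g, hg⟩ := hR x
      refine ⟨g • x, ?_, ?_⟩
      · rw [Metric.mem_closedBall, dist_comm]
        exact hg.le
      · exact Quotient.sound (MulAction.mem_orbit x g)
    refine ⟨?_⟩
    rw [himg]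
    exact (isCompact_closedBall p R).image continuous_quotient_mk'
  · right
    push_neg at hball
    -- hball : ∀ R, ∃ x, ∀ g, R ≤ dist p (g • x)
    by_contra hfin
    have hinf : Infinite G := not_finite_iff_infinite.mp hfin
    -- the orbit of p is unbounded
    have horb : ∀ a : ℝ, ∃ g : G, a < dist p (g • p) := by
      intro a
      by_contra hc
      push_neg at hc
      have hK : IsCompact (Metric.closedBall p (max a 0)) := isCompact_closedBall p _
      have hfin' := ProperlyDiscontinuousSMul.finite_disjoint_inter_image (Γ := G) hK hK
      have huniv : (Set.univ : Set G).Finite := by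
        refine hfin'.subset ?_
        intro g _
        simp only [Set.mem_setOf_eq]
        refine ⟨g • p, ⟨p, ?_, rfl⟩, ?_⟩
        · exact Metric.mem_closedBall.mpr (by simp)
        · exact Metric.mem_closedBall.mpr
            (by rw [dist_comm]; exact le_max_of_le_left (hc g))
      exact Set.infinite_univ huniv
    -- each orbit has a point closest to p
    have hmin : ∀ x : X, ∃ y : X, (∃ g₀ : G, y = g₀ • x) ∧
        ∀ g : G, dist p y ≤ dist p (g • x) := by
      intro x
      have hK : IsCompact ({x} : Set X) := isCompact_singleton
      have hL : IsCompact (Metric.closedBall p (dist p x)) := isCompact_closedBall p _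
      have hfinS := ProperlyDiscontinuousSMul.finite_disjoint_inter_image (Γ := G) hK hL
      have hSfin : {g : G | dist p (g • x) ≤ dist p x}.Finite := by
        refine hfinS.subset ?_
        intro g hg
        simp only [Set.mem_setOf_eq] at hg ⊢
        refine ⟨g • x, ⟨x, rfl, rfl⟩, ?_⟩
        exact Metric.mem_closedBall.mpr (by rw [dist_comm]; exact hg)
      have hSne : {g : G | dist p (g • x) ≤ dist p x}.Nonempty := ⟨1, by simp⟩
      obtain ⟨g₀, hg₀S, hg₀min⟩ :=
        Set.exists_min_image _ (fun g : G => dist p (g • x)) hSfin hSne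
      refine ⟨g₀ • x, ⟨g₀, rfl⟩, fun g => ?_⟩
      by_cases hgS : g ∈ {g : G | dist p (g • x) ≤ dist p x}
      · exact hg₀min g hgS
      · have h1 : dist p (g₀ • x) ≤ dist p x := hg₀S
        have h2 : dist p x < dist p (g • x) := lt_of_not_ge hgS
        linarith
    -- main geometric estimate: diam (sphere p r) ≥ r for arbitrarily large r
    have key : ∀ a : ℝ, ∃ r ≥ a, 1 ≤ diam (sphere p r) / r := by
      intro a
      obtain ⟨g, hg⟩ := horb (max a 0)
      set r := dist p (g • p) with hr
      have hrpos : 0 < r := lt_of_le_of_lt (le_max_right a 0) hg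
      have hra : a ≤ r := le_of_lt (lt_of_le_of_lt (le_max_left a 0) hg)
      refine ⟨r, hra, ?_⟩
      obtain ⟨x, hx⟩ := hball r
      obtain ⟨y, ⟨g₀, rfl⟩, hy⟩ := hmin x
      have hy' : ∀ h : G, dist p (g₀ • x) ≤ dist p (h • (g₀ • x)) := by
        intro h
        rw [smul_smul]
        exact hy (h * g₀)
      have hrR : r ≤ dist p (g₀ • x) := hx g₀
      obtain ⟨γ, hγ0, hγR, hγmin⟩ := hgeo p (g₀ • x)
      have hmem0 : (0 : ℝ) ∈ Set.Icc (0 : ℝ) (dist p (g₀ • x)) := ⟨le_refl _, dist_nonneg⟩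
      have hmemr : r ∈ Set.Icc (0 : ℝ) (dist p (g₀ • x)) := ⟨hrpos.le, hrR⟩
      have hmemR : dist p (g₀ • x) ∈ Set.Icc (0 : ℝ) (dist p (g₀ • x)) :=
        ⟨dist_nonneg, le_refl _⟩
      have hd1 : dist (γ r) p = r := by
        have h := hγmin r hmemr 0 hmem0
        rw [hγ0] at h
        rw [h, sub_zero, abs_of_nonneg hrpos.le]
      have hd2 : dist (γ r) (g₀ • x) = dist p (g₀ • x) - r := by
        have h := hγmin r hmemr (dist p (g₀ • x)) hmemR
        rw [hγR] at h
        rw [h, abs_of_nonpos (by linarith)]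
        ring
      have hdm : dist p (g₀ • x) ≤ dist (g • p) (g₀ • x) := by
        have h1 : dist (g • p) (g • (g⁻¹ • (g₀ • x))) = dist p (g⁻¹ • (g₀ • x)) :=
          (hiso g).dist_eq p (g⁻¹ • (g₀ • x))
        rw [smul_inv_smul] at h1
        rw [h1]
        exact hy' g⁻¹
      have htri := dist_triangle (g • p) (γ r) (g₀ • x)
      have hfar : r ≤ dist (g • p) (γ r) := by linarith
      have hm1 : g • p ∈ sphere p r := by
        simp only [mem_sphere]
        rw [dist_comm]
      have hm2 : γ r ∈ sphere p r := Metric.mem_sphere.mpr hd1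
      have hbdd : Bornology.IsBounded (sphere p r) :=
        (Metric.isBounded_closedBall (x := p) (r := r)).subset Metric.sphere_subset_closedBall
      have hdiam : r ≤ diam (sphere p r) :=
        le_trans hfar (dist_le_diam_of_mem hbdd hm1 hm2)
      rw [le_div_iff₀ hrpos, one_mul]
      exact hdiam
    -- the ratio is bounded above by 2
    have hle2 : ∀ r : ℝ, diam (sphere p r) / r ≤ 2 := by
      intro r
      rcases lt_trichotomy r 0 with h | h | h
      · have hsph : sphere p r = (∅ : Set X) := by
          ext z
          simp only [mem_sphere, Set.mem_empty_iff_false, iff_false]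
          intro hz
          have := dist_nonneg (x := z) (y := p)
          linarith
        rw [hsph, diam_empty, zero_div]
        norm_num
      · rw [h, div_zero]
        norm_num
      · rw [div_le_iff₀ h]
        calc diam (sphere p r) ≤ diam (Metric.closedBall p r) :=
              diam_mono Metric.sphere_subset_closedBall Metric.isBounded_closedBall
          _ ≤ 2 * r := diam_closedBall h.le
    have hbound : IsBoundedUnder (· ≤ ·) atTop (fun r : ℝ => diam (sphere p r) / r) :=
      isBoundedUnder_of ⟨2, hle2⟩
    have hev : ∀ᶠ r in atTop, diam (sphere p r) / r < 1 :=
      eventually_lt_of_limsup_lt hgrowth hbound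
    have hfreq : ∃ᶠ r in atTop, 1 ≤ diam (sphere p r) / r :=
      frequently_atTop.mpr key
    obtain ⟨r, h1, h2⟩ := (hfreq.and_eventually hev).exists
    linarith
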